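/- Let G be a bipartite graph with bipartition (V₁, V₂) where |V₁| = |V₂| = m, and suppose G contains no path of length k (i.e. no path with k edges). Then there exist X₁ ⊆ V₁ and X₂ ⊆ V₂ with |X₁| = |X₂| ≥ (2m − k)/4 such that G has no edges between X₁ and X₂. -/

import Mathlib

open Finset SimpleGraph

section Aux

variable {V : Type*} [Fintype V] [DecidableEq V]

private lemma count_partition (A B T : Finset V) (hU : A ∪ B = Finset.univ)
    (hd : Disjoint A B) : (T ∩ A).card + (T ∩ B).card = T.card := by
  rw [← Finset.card_union_of_disjoint
    (hd.mono (Finset.inter_subset_right) (Finset.inter_subset_right)),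
    ← Finset.inter_union_distrib_left, hU, Finset.inter_univ]

/-- In a bipartite graph, the support of a path starting in `A` has at least half of its
vertices in `A`. -/
private lemma walk_alt (G : SimpleGraph V) : ∀ {v u : V} (p : G.Walk v u), p.IsPath →
    ∀ A B : Finset V, A ∪ B = Finset.univ → Disjoint A B →
    (∀ x y : V, G.Adj x y → (x ∈ A ∧ y ∈ B) ∨ (x ∈ B ∧ y ∈ A)) → v ∈ A →
    p.length + 1 ≤ 2 * (p.support.toFinset ∩ A).card ∧
    2 * (p.support.toFinset ∩ A).card ≤ p.length + 2 := by
  intro v u p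
  induction p with
  | nil =>
    intro hp A B hU hd hbip hv
    simp [Walk.support_nil, Finset.singleton_inter_of_mem hv]
  | @cons v w u h q IH =>
    intro hp A B hU hd hbip hv
    have hq : q.IsPath := hp.of_cons
    have hw : w ∈ B := by
      rcases hbip v w h with ⟨_, hwB⟩ | ⟨hvB, _⟩
      · exact hwB
      · exact absurd hvB (Finset.disjoint_left.mp hd hv)
    have IH' := IH hq B A (by rw [Finset.union_comm]; exact hU) hd.symm
      (fun x y hxy => (hbip x y hxy).symm) hw
    have hvq : v ∉ q.support := ((Walk.cons_isPath_iff _ _).mp hp).2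
    have hqcard : q.support.toFinset.card = q.length + 1 := by
      rw [List.toFinset_card_of_nodup hq.support_nodup, Walk.length_support]
    have hpart : (q.support.toFinset ∩ A).card + (q.support.toFinset ∩ B).card
        = q.length + 1 := by
      rw [count_partition A B _ hU hd, hqcard]
    have hins : ((Walk.cons h q).support.toFinset ∩ A).card
        = (q.support.toFinset ∩ A).card + 1 := by
      have hsupp : (Walk.cons h q).support.toFinset = insert v q.support.toFinset := by
        simp [Walk.support_cons]
      rw [hsupp, Finset.insert_inter_of_mem hv,
        Finset.card_insert_of_notMem (by simp [hvq])]
    simp only [Walk.length_cons]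
    omega

private lemma path_shrink (G : SimpleGraph V) : ∀ {u v : V} (p : G.Walk u v), p.IsPath →
    ∀ j ≤ p.length, ∃ (x y : V) (q : G.Walk x y), q.IsPath ∧ q.length = j := by
  intro u v p
  induction p with
  | nil =>
    intro hp j hj
    simp only [Walk.length_nil, Nat.le_zero] at hj
    exact ⟨u, u, Walk.nil, Walk.IsPath.nil, by simp [hj]⟩
  | @cons a b c h q IH =>
    intro hp j hj
    rcases Nat.lt_or_ge j (q.length + 1) with hlt | hge
    · exact IH hp.of_cons j (by omega)
    · refine ⟨a, c, Walk.cons h q, hp, ?_⟩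
      simp only [Walk.length_cons] at hj ⊢
      omega

/-- DFS-based main lemma: there is a "finished" set `F` and a "stack" `S` (the support of a
path), such that all edges from `F` go into `F ∪ S`, and one side of `F` has exactly `N`
vertices while the other has less than `N`, with the stack having few vertices on that
other side. -/
private lemma dfs_aux (G : SimpleGraph V) (V₁ V₂ : Finset V) (k N : ℕ)
    (hunion : V₁ ∪ V₂ = Finset.univ) (hdisj : Disjoint V₁ V₂)
    (hbip : ∀ u v : V, G.Adj u v → (u ∈ V₁ ∧ v ∈ V₂) ∨ (u ∈ V₂ ∧ v ∈ V₁))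
    (hlen : ∀ (u v : V) (p : G.Walk u v), p.IsPath → p.length + 1 ≤ k)
    (hNV₁ : N ≤ V₁.card) :
    ∀ n (F S : Finset V),
      (S = ∅ ∨ ∃ (v u : V) (p : G.Walk v u), p.IsPath ∧ S = p.support.toFinset) →
      Disjoint F S →
      (∀ x ∈ F, ∀ y, G.Adj x y → y ∈ F ∨ y ∈ S) →
      (F ∩ V₁).card + 1 ≤ N → (F ∩ V₂).card + 1 ≤ N →
      2 * (Finset.univ \ (F ∪ S)).card + S.card ≤ n →
      ∃ F' S' : Finset V,
        (∀ x ∈ F', ∀ y, G.Adj x y → y ∈ F' ∨ y ∈ S') ∧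
        (((F' ∩ V₁).card = N ∧ (F' ∩ V₂).card + 1 ≤ N ∧ 2 * (S' ∩ V₂).card ≤ k) ∨
         ((F' ∩ V₂).card = N ∧ (F' ∩ V₁).card + 1 ≤ N ∧ 2 * (S' ∩ V₁).card ≤ k)) := by
  intro n
  induction n with
  | zero =>
    intro F S hstack hFS hinv ha hb hn
    exfalso
    have hSe : S = ∅ := Finset.card_eq_zero.mp (by omega)
    have hUe : Finset.univ \ (F ∪ S) = ∅ := Finset.card_eq_zero.mp (by omega)
    have hsub : V₁ ⊆ F := by
      intro x hx
      have : x ∈ F ∪ S := by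
        have := Finset.sdiff_eq_empty_iff_subset.mp hUe (Finset.mem_univ x)
        exact this
      rw [hSe, Finset.union_empty] at this
      exact this
    have : F ∩ V₁ = V₁ := Finset.inter_eq_right.mpr hsub
    rw [this] at ha
    omega
  | succ n IH =>
    intro F S hstack hFS hinv ha hb hn
    rcases hstack with rfl | ⟨v, u, p, hp, rfl⟩
    · -- empty stack: pick a new root, or everything is finished (contradiction)
      rcases Finset.eq_empty_or_nonempty (Finset.univ \ (F ∪ (∅ : Finset V))) with hUe | ⟨w, hw⟩
      · exfalso
        have hsub : V₁ ⊆ F := by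
          intro x hx
          have : x ∈ F ∪ (∅ : Finset V) :=
            Finset.sdiff_eq_empty_iff_subset.mp hUe (Finset.mem_univ x)
          simpa using this
        have : F ∩ V₁ = V₁ := Finset.inter_eq_right.mpr hsub
        rw [this] at ha
        omega
      · have hwF : w ∉ F := by
          have := Finset.mem_sdiff.mp hw
          simp only [Finset.union_empty] at this
          exact this.2
        apply IH F {w}
          (Or.inr ⟨w, w, Walk.nil, Walk.IsPath.nil, by simp⟩)
          (Finset.disjoint_singleton_right.mpr hwF)
          (fun x hx y hy => (hinv x hx y hy).elim Or.inl
            (fun h => absurd h (Finset.notMem_empty y)))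
          ha hb
        have key : Finset.univ \ (F ∪ {w}) = (Finset.univ \ (F ∪ ∅)) \ {w} := by
          ext x; simp <;> tauto
        have hsub : {w} ⊆ Finset.univ \ (F ∪ (∅ : Finset V)) := by
          simpa using hw
        have hc := Finset.card_sdiff_of_subset hsub
        rw [key, hc]
        have hpos : 1 ≤ (Finset.univ \ (F ∪ (∅ : Finset V))).card :=
          Finset.card_pos.mpr ⟨w, hw⟩
        simp only [Finset.card_singleton] at *
        omega
    · -- stack is the support of a path p from v (the top) to u
      by_cases hpushc : ∃ w, G.Adj v w ∧ w ∉ F ∧ w ∉ p.support.toFinset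
      · -- PUSH
        obtain ⟨w, hadj, hwF, hwS⟩ := hpushc
        have hp' : (Walk.cons hadj.symm p).IsPath :=
          (Walk.cons_isPath_iff _ _).mpr ⟨hp, by simpa using hwS⟩
        apply IH F (insert w p.support.toFinset)
          (Or.inr ⟨w, u, Walk.cons hadj.symm p, hp', by simp [Walk.support_cons]⟩)
          (Finset.disjoint_insert_right.mpr ⟨hwF, hFS⟩)
          (fun x hx y hy => (hinv x hx y hy).imp id (fun h => Finset.mem_insert_of_mem h))
          ha hb
        have hwU : w ∈ Finset.univ \ (F ∪ p.support.toFinset) := by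
          simp [hwF, hwS]
        have key : Finset.univ \ (F ∪ insert w p.support.toFinset)
            = (Finset.univ \ (F ∪ p.support.toFinset)) \ {w} := by
          ext x; simp; tauto
        have hc := Finset.card_sdiff_of_subset (Finset.singleton_subset_iff.mpr hwU)
        have hpos : 1 ≤ (Finset.univ \ (F ∪ p.support.toFinset)).card :=
          Finset.card_pos.mpr ⟨w, hwU⟩
        rw [key, hc, Finset.card_insert_of_notMem (by simpa using hwS)]
        simp only [Finset.card_singleton] at *
        omega
      · -- POP
        push_neg at hpushc
        have hnb : ∀ y, G.Adj v y → y ∈ F ∨ y ∈ p.support.toFinset := by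
          intro y hy
          by_cases h : y ∈ F
          · exact Or.inl h
          · exact Or.inr (hpushc y hy h)
        have hvS : v ∈ p.support.toFinset := by
          simp [Walk.start_mem_support]
        have hvF : v ∉ F := Finset.disjoint_right.mp hFS hvS
        obtain ⟨S', hstack', hsub, hScard, hunion_eq, hvS'⟩ :
            ∃ S' : Finset V,
              (S' = ∅ ∨ ∃ (v' u' : V) (p' : G.Walk v' u'), p'.IsPath ∧ S' = p'.support.toFinset) ∧
              S' ⊆ p.support.toFinset ∧ S'.card + 1 = p.support.toFinset.card ∧
              insert v F ∪ S' = F ∪ p.support.toFinset ∧ v ∉ S' := by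
          cases p with
          | nil =>
            refine ⟨∅, Or.inl rfl, Finset.empty_subset _, by simp, ?_, Finset.notMem_empty v⟩
            ext x; simp [Walk.support_nil]
          | cons h' q =>
            have hvq : v ∉ q.support := ((Walk.cons_isPath_iff _ _).mp hp).2
            refine ⟨q.support.toFinset,
              Or.inr ⟨_, _, q, ((Walk.cons_isPath_iff _ _).mp hp).1, rfl⟩, ?_, ?_, ?_,
              by simpa using hvq⟩
            · simp only [Walk.support_cons, List.toFinset_cons]
              exact Finset.subset_insert _ _
            · simp only [Walk.support_cons, List.toFinset_cons]
              rw [Finset.card_insert_of_notMem (by simpa using hvq)]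
            · simp only [Walk.support_cons, List.toFinset_cons]
              ext x; simp <;> tauto
        have htrans : ∀ y, y ∈ F ∪ p.support.toFinset → y ∈ insert v F ∨ y ∈ S' := by
          intro y hy
          rw [← hunion_eq] at hy
          exact Finset.mem_union.mp hy
        have hinv' : ∀ x ∈ insert v F, ∀ y, G.Adj x y → y ∈ insert v F ∨ y ∈ S' := by
          intro x hx y hy
          rcases Finset.mem_insert.mp hx with rfl | hxF
          · exact htrans y ((hnb y hy).elim (Finset.mem_union_left _) (Finset.mem_union_right _))
          · exact htrans y ((hinv x hxF y hy).elim (Finset.mem_union_left _)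
              (Finset.mem_union_right _))
        have hFS' : Disjoint (insert v F) S' :=
          Finset.disjoint_insert_left.mpr ⟨hvS', hFS.mono_right hsub⟩
        have hpcard : p.support.toFinset.card = p.length + 1 := by
          rw [List.toFinset_card_of_nodup hp.support_nodup, Walk.length_support]
        have hklen : p.length + 1 ≤ k := hlen _ _ p hp
        have hmeasure : 2 * (Finset.univ \ (insert v F ∪ S')).card + S'.card ≤ n := by
          rw [hunion_eq]; omega
        have hv12 : v ∈ V₁ ∨ v ∈ V₂ := by
          have hv : v ∈ V₁ ∪ V₂ := by rw [hunion]; exact Finset.mem_univ v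
          exact Finset.mem_union.mp hv
        rcases hv12 with hv1 | hv2
        · -- v ∈ V₁
          have ha' : (insert v F ∩ V₁).card = (F ∩ V₁).card + 1 := by
            rw [Finset.insert_inter_of_mem hv1,
              Finset.card_insert_of_notMem (fun hc => hvF (Finset.mem_inter.mp hc).1)]
          have hb' : insert v F ∩ V₂ = F ∩ V₂ :=
            Finset.insert_inter_of_notMem (Finset.disjoint_left.mp hdisj hv1)
          by_cases hstop : (F ∩ V₁).card + 1 = N
          · refine ⟨insert v F, S', hinv', Or.inl ⟨by omega, by rw [hb']; exact hb, ?_⟩⟩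
            have halt := (walk_alt G p hp V₁ V₂ hunion hdisj hbip hv1).1
            have hpart := count_partition V₁ V₂ p.support.toFinset hunion hdisj
            have hmono : (S' ∩ V₂).card ≤ (p.support.toFinset ∩ V₂).card :=
              Finset.card_le_card (Finset.inter_subset_inter hsub Finset.Subset.rfl)
            omega
          · exact IH (insert v F) S' hstack' hFS' hinv' (by omega)
              (by rw [hb']; exact hb) hmeasure
        · -- v ∈ V₂
          have ha' : (insert v F ∩ V₂).card = (F ∩ V₂).card + 1 := by
            rw [Finset.insert_inter_of_mem hv2,
              Finset.card_insert_of_notMem (fun hc => hvF (Finset.mem_inter.mp hc).1)]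
          have hb' : insert v F ∩ V₁ = F ∩ V₁ :=
            Finset.insert_inter_of_notMem (Finset.disjoint_right.mp hdisj hv2)
          by_cases hstop : (F ∩ V₂).card + 1 = N
          · refine ⟨insert v F, S', hinv', Or.inr ⟨by omega, by rw [hb']; exact ha, ?_⟩⟩
            have halt := (walk_alt G p hp V₂ V₁ (by rw [Finset.union_comm]; exact hunion)
              hdisj.symm (fun x y hxy => (hbip x y hxy).symm) hv2).1
            have hpart := count_partition V₂ V₁ p.support.toFinset
              (by rw [Finset.union_comm]; exact hunion) hdisj.symm
            have hmono : (S' ∩ V₁).card ≤ (p.support.toFinset ∩ V₁).card :=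
              Finset.card_le_card (Finset.inter_subset_inter hsub Finset.Subset.rfl)
            omega
          · exact IH (insert v F) S' hstack' hFS' hinv' (by rw [hb']; exact ha)
              (by omega) hmeasure

end Aux

theorem bipartite_no_long_path_independent_sets {V : Type*} [Fintype V] [DecidableEq V]
    (G : SimpleGraph V) (V₁ V₂ : Finset V) (m k : ℕ)
    (hdisj : Disjoint V₁ V₂) (hunion : V₁ ∪ V₂ = Finset.univ)
    (hcard₁ : V₁.card = m) (hcard₂ : V₂.card = m)
    (hbip : ∀ u v : V, G.Adj u v → (u ∈ V₁ ∧ v ∈ V₂) ∨ (u ∈ V₂ ∧ v ∈ V₁))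
    (hnopath : ¬ ∃ (u v : V) (w : G.Walk u v), w.IsPath ∧ w.length = k) :
    ∃ X₁ X₂ : Finset V, X₁ ⊆ V₁ ∧ X₂ ⊆ V₂ ∧ X₁.card = X₂.card ∧
      (2 * (m : ℝ) - (k : ℝ)) / 4 ≤ (X₁.card : ℝ) ∧
      ∀ x₁ ∈ X₁, ∀ x₂ ∈ X₂, ¬ G.Adj x₁ x₂ := by
  by_cases htriv : 2 * m ≤ k
  · refine ⟨∅, ∅, Finset.empty_subset _, Finset.empty_subset _, rfl, ?_, by simp⟩
    have : (2 * m : ℝ) ≤ k := by exact_mod_cast htriv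
    simp only [Finset.card_empty, Nat.cast_zero]
    linarith
  · push_neg at htriv
    -- k ≥ 1
    have hk1 : 1 ≤ k := by
      by_contra hk
      have hk0 : k = 0 := by omega
      have hm1 : 1 ≤ m := by omega
      obtain ⟨v, hv⟩ : V₁.Nonempty := Finset.card_pos.mp (by omega)
      exact hnopath ⟨v, v, Walk.nil, Walk.IsPath.nil, by simp [hk0]⟩
    -- no path has k or more edges
    have hlen : ∀ (u v : V) (p : G.Walk u v), p.IsPath → p.length + 1 ≤ k := by
      intro u v p hp
      by_contra hc
      push_neg at hc
      obtain ⟨x, y, q, hq, hqlen⟩ := path_shrink G p hp k (by omega)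
      exact hnopath ⟨x, y, q, hq, hqlen⟩
    set N : ℕ := (2 * m - k + 3) / 4 with hN
    have hN1 : 1 ≤ N := by omega
    have hNm : N ≤ m := by omega
    obtain ⟨F, S, hinv, hcase⟩ := dfs_aux G V₁ V₂ k N hunion hdisj hbip hlen
      (by omega) (2 * (Finset.univ : Finset V).card) ∅ ∅ (Or.inl rfl)
      (Finset.disjoint_empty_right _)
      (fun x hx => absurd hx (Finset.notMem_empty x))
      (by simp; omega) (by simp; omega) (by simp)
    have hNbound : (2 * (m : ℝ) - k) / 4 ≤ (N : ℝ) := by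
      have h4 : 2 * m ≤ 4 * N + k := by omega
      have h4' : (2 * m : ℝ) ≤ 4 * N + k := by exact_mod_cast h4
      linarith
    rcases hcase with ⟨hA, hB, hS2⟩ | ⟨hA, hB, hS2⟩
    · -- F ∩ V₁ has exactly N elements; take X₂ inside V₂ \ (F ∪ S)
      have hbig : N ≤ (V₂ \ (F ∪ S)).card := by
        have h1 : (F ∩ V₂) ∪ (S ∩ V₂) ⊆ V₂ :=
          Finset.union_subset Finset.inter_subset_right Finset.inter_subset_right
        have h2 : V₂ \ (F ∪ S) = V₂ \ ((F ∩ V₂) ∪ (S ∩ V₂)) := by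
          ext x; simp; tauto
        rw [h2, Finset.card_sdiff_of_subset h1]
        have h3 := Finset.card_union_le (F ∩ V₂) (S ∩ V₂)
        omega
      obtain ⟨X₂, hX₂sub, hX₂card⟩ := Finset.exists_subset_card_eq hbig
      refine ⟨F ∩ V₁, X₂, Finset.inter_subset_right,
        hX₂sub.trans (Finset.sdiff_subset), by rw [hA, hX₂card], ?_, ?_⟩
      · rw [hA]; exact hNbound
      · intro x₁ hx₁ x₂ hx₂ hadj
        have hx₁F : x₁ ∈ F := (Finset.mem_inter.mp hx₁).1
        have hx₂' := Finset.mem_sdiff.mp (hX₂sub hx₂)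
        rcases hinv x₁ hx₁F x₂ hadj with h | h
        · exact hx₂'.2 (Finset.mem_union_left _ h)
        · exact hx₂'.2 (Finset.mem_union_right _ h)
    · -- symmetric case
      have hbig : N ≤ (V₁ \ (F ∪ S)).card := by
        have h1 : (F ∩ V₁) ∪ (S ∩ V₁) ⊆ V₁ :=
          Finset.union_subset Finset.inter_subset_right Finset.inter_subset_right
        have h2 : V₁ \ (F ∪ S) = V₁ \ ((F ∩ V₁) ∪ (S ∩ V₁)) := by
          ext x; simp; tauto
        rw [h2, Finset.card_sdiff_of_subset h1]
        have h3 := Finset.card_union_le (F ∩ V₁) (S ∩ V₁)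
        omega
      obtain ⟨X₁, hX₁sub, hX₁card⟩ := Finset.exists_subset_card_eq hbig
      refine ⟨X₁, F ∩ V₂, hX₁sub.trans (Finset.sdiff_subset),
        Finset.inter_subset_right, by rw [hA, hX₁card], ?_, ?_⟩
      · rw [hX₁card]; exact hNbound
      · intro x₁ hx₁ x₂ hx₂ hadj
        have hx₂F : x₂ ∈ F := (Finset.mem_inter.mp hx₂).1
        have hx₁' := Finset.mem_sdiff.mp (hX₁sub hx₁)
        rcases hinv x₂ hx₂F x₁ hadj.symm with h | h
        · exact hx₁'.2 (Finset.mem_union_left _ h)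
        · exact hx₁'.2 (Finset.mem_union_right _ h)
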